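/- arXiv:2304.06549 — 2 statements merged into one kernel-verified Lean document; each statement's English description precedes it below -/
import Mathlib

section
/- For any d ≥ 1 and any θ = (θ^1,...,θ^d) ∈ [0, π/2]^d, it holds that ‖sin(θ)‖² ‖sin(2θ)‖² − ⟨sin(2θ), sin(θ)⟩² − 4 ‖sin(θ)‖² Σ_{i=1}^d sin⁴(θ^i) ≤ 0, where sin is applied componentwise, ‖·‖ is the Euclidean norm, and ⟨·,·⟩ the Euclidean inner product. -/
open Real Finset

theorem stmt_2 (d : ℕ) (hd : 1 ≤ d) (θ : Fin d → ℝ)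
    (hθ : ∀ i, θ i ∈ Set.Icc 0 (π / 2)) :
    (∑ i, sin (θ i) ^ 2) * (∑ i, sin (2 * θ i) ^ 2)
      - (∑ i, sin (2 * θ i) * sin (θ i)) ^ 2
      - 4 * (∑ i, sin (θ i) ^ 2) * (∑ i, sin (θ i) ^ 4) ≤ 0 := by
  have hc0 : ∀ i, 0 ≤ cos (θ i) := fun i => by
    have h := hθ i
    exact Real.cos_nonneg_of_mem_Icc ⟨by linarith [h.1, pi_pos], h.2⟩
  have hc1 : ∀ i, cos (θ i) ≤ 1 := fun i => Real.cos_le_one _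
  have hcs : ∀ i, 1 - sin (θ i) ^ 2 ≤ cos (θ i) := fun i => by
    have := sin_sq_add_cos_sq (θ i)
    nlinarith [hc0 i, hc1 i]
  set A := ∑ i, sin (θ i) ^ 2 with hA
  set B := ∑ i, sin (θ i) ^ 4 with hB
  set K := ∑ i, sin (θ i) ^ 2 * cos (θ i) with hK
  have h2 : (∑ i, sin (2 * θ i) ^ 2) = 4 * (A - B) := by
    rw [hA, hB, ← Finset.sum_sub_distrib, Finset.mul_sum]
    refine Finset.sum_congr rfl fun i _ => ?_
    rw [sin_two_mul]
    have := sin_sq_add_cos_sq (θ i)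
    nlinarith []
  have h3 : (∑ i, sin (2 * θ i) * sin (θ i)) = 2 * K := by
    rw [hK, Finset.mul_sum]
    refine Finset.sum_congr rfl fun i _ => ?_
    rw [sin_two_mul]; ring
  rw [h2, h3]
  have hBA : B ≤ A := by
    refine Finset.sum_le_sum fun i _ => ?_
    nlinarith [sin_sq_le_one (θ i), sq_nonneg (sin (θ i))]
  have hB0 : 0 ≤ B := Finset.sum_nonneg fun i _ => by positivity
  have hKge : A - B ≤ K := by
    rw [hA, hB, hK, ← Finset.sum_sub_distrib]
    refine Finset.sum_le_sum fun i _ => ?_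
    nlinarith [hcs i, sq_nonneg (sin (θ i))]
  nlinarith [sq_nonneg B, sq_nonneg (K - (A - B))]
end

section
/- Let α ≤ 0, D > 0. Then ∫₀^D e^{−(α/8)r²} ∫₀^r e^{(α/8)s²} ds dr ≤ ∫₀^D r e^{−(α/8)r²} dr = (4/|α|)(e^{|α|D²/8} − 1) when α < 0. Consequently λ_V = (∫₀^D Φ/φ)^{-1} ≥ (|α|/4)/(e^{|α|D²/8} − 1). -/
open Real intervalIntegral

/-- Explicit lower bound on the contraction rate `λ_V` for a constant
semiconvexity modulus `κ_V = α ≤ 0` (Appendix C), where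
`φ(r) = e^{(α/8)r²}` and `Φ(r) = ∫₀^r φ`. -/
theorem stmt_17 (α D : ℝ) (hα : α ≤ 0) (hD : 0 < D) :
    (∫ r in (0:ℝ)..D, Real.exp (-(α / 8) * r ^ 2) * ∫ s in (0:ℝ)..r, Real.exp ((α / 8) * s ^ 2))
        ≤ ∫ r in (0:ℝ)..D, r * Real.exp (-(α / 8) * r ^ 2) ∧
    (α < 0 → (∫ r in (0:ℝ)..D, r * Real.exp (-(α / 8) * r ^ 2))
        = (4 / |α|) * (Real.exp (|α| * D ^ 2 / 8) - 1)) ∧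
    (∫ r in (0:ℝ)..D, Real.exp (-(α / 8) * r ^ 2) * ∫ s in (0:ℝ)..r, Real.exp ((α / 8) * s ^ 2))⁻¹
        ≥ (|α| / 4) / (Real.exp (|α| * D ^ 2 / 8) - 1) := by
  have hc1 : Continuous fun r : ℝ => Real.exp (-(α / 8) * r ^ 2) := by continuity
  have hc2 : Continuous fun s : ℝ => Real.exp ((α / 8) * s ^ 2) := by continuity
  have hcInner : Continuous fun r : ℝ => ∫ s in (0:ℝ)..r, Real.exp ((α / 8) * s ^ 2) :=
    intervalIntegral.continuous_primitive (fun a b => hc2.intervalIntegrable a b) 0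
  have hcF : Continuous fun r : ℝ =>
      Real.exp (-(α / 8) * r ^ 2) * ∫ s in (0:ℝ)..r, Real.exp ((α / 8) * s ^ 2) :=
    hc1.mul hcInner
  have hcG : Continuous fun r : ℝ => r * Real.exp (-(α / 8) * r ^ 2) := by continuity
  -- First inequality
  have hIneq : (∫ r in (0:ℝ)..D,
      Real.exp (-(α / 8) * r ^ 2) * ∫ s in (0:ℝ)..r, Real.exp ((α / 8) * s ^ 2))
      ≤ ∫ r in (0:ℝ)..D, r * Real.exp (-(α / 8) * r ^ 2) := by
    apply intervalIntegral.integral_mono_on hD.le (hcF.intervalIntegrable _ _)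
      (hcG.intervalIntegrable _ _)
    intro r hr
    have hr0 : 0 ≤ r := hr.1
    have hinner : (∫ s in (0:ℝ)..r, Real.exp ((α / 8) * s ^ 2)) ≤ r := by
      have : (∫ s in (0:ℝ)..r, Real.exp ((α / 8) * s ^ 2)) ≤ ∫ s in (0:ℝ)..r, (1 : ℝ) := by
        apply intervalIntegral.integral_mono_on hr0 (hc2.intervalIntegrable _ _)
          intervalIntegrable_const
        intro s _
        rw [Real.exp_le_one_iff]
        nlinarith [sq_nonneg s]
      simpa using this
    have h := mul_le_mul_of_nonneg_left hinner (Real.exp_pos (-(α / 8) * r ^ 2)).le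
    linarith
  -- Second: exact value for α < 0
  have hEq : α < 0 → (∫ r in (0:ℝ)..D, r * Real.exp (-(α / 8) * r ^ 2))
      = (4 / |α|) * (Real.exp (|α| * D ^ 2 / 8) - 1) := by
    intro hαneg
    have habs : |α| = -α := abs_of_neg hαneg
    have hderiv : ∀ r : ℝ, HasDerivAt (fun r : ℝ => (4 / |α|) * Real.exp (-(α / 8) * r ^ 2))
        (r * Real.exp (-(α / 8) * r ^ 2)) r := by
      intro r
      have h1 : HasDerivAt (fun r : ℝ => -(α / 8) * r ^ 2) (-(α / 8) * (2 * r)) r := by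
        simpa using ((hasDerivAt_pow 2 r).const_mul (-(α / 8)))
      have h2 : HasDerivAt (fun r : ℝ => Real.exp (-(α / 8) * r ^ 2))
          (Real.exp (-(α / 8) * r ^ 2) * (-(α / 8) * (2 * r))) r := h1.exp
      have h3 := h2.const_mul (4 / |α|)
      refine h3.congr_deriv ?_
      rw [habs]
      field_simp [hαneg.ne]
      ring
    have := intervalIntegral.integral_eq_sub_of_hasDerivAt
      (fun r _ => hderiv r) (hcG.intervalIntegrable 0 D)
    rw [this]
    have hD2 : -(α / 8) * D ^ 2 = |α| * D ^ 2 / 8 := by rw [habs]; ring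
    rw [hD2]
    simp [mul_sub]
  refine ⟨hIneq, hEq, ?_⟩
  -- Third part
  rcases eq_or_lt_of_le hα with h0 | hαneg
  · -- α = 0
    subst h0
    have hnn : (0:ℝ) ≤ ∫ r in (0:ℝ)..D,
        Real.exp (-((0:ℝ) / 8) * r ^ 2) * ∫ s in (0:ℝ)..r, Real.exp (((0:ℝ) / 8) * s ^ 2) := by
      apply intervalIntegral.integral_nonneg hD.le
      intro r hr
      have hinner : (0:ℝ) ≤ ∫ s in (0:ℝ)..r, Real.exp (((0:ℝ) / 8) * s ^ 2) :=
        intervalIntegral.integral_nonneg hr.1 (fun s _ => (Real.exp_pos _).le)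
      exact mul_nonneg (Real.exp_pos _).le hinner
    simpa using inv_nonneg.mpr hnn
  · -- α < 0
    have habs : |α| = -α := abs_of_neg hαneg
    have hIpos : 0 < ∫ r in (0:ℝ)..D,
        Real.exp (-(α / 8) * r ^ 2) * ∫ s in (0:ℝ)..r, Real.exp ((α / 8) * s ^ 2) := by
      apply intervalIntegral.intervalIntegral_pos_of_pos_on (hcF.intervalIntegrable 0 D) _ hD
      intro r hr
      have hinner : 0 < ∫ s in (0:ℝ)..r, Real.exp ((α / 8) * s ^ 2) := by
        apply intervalIntegral.intervalIntegral_pos_of_pos_on (hc2.intervalIntegrable 0 r)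
          (fun s _ => Real.exp_pos _) hr.1
      exact mul_pos (Real.exp_pos _) hinner
    have hE1 : 0 < Real.exp (|α| * D ^ 2 / 8) - 1 := by
      have hap : 0 < |α| := abs_pos.mpr hαneg.ne
      have : 0 < |α| * D ^ 2 / 8 := by positivity
      have := Real.exp_lt_exp.mpr this
      simp only [Real.exp_zero] at this
      linarith
    have hJ : (∫ r in (0:ℝ)..D,
        Real.exp (-(α / 8) * r ^ 2) * ∫ s in (0:ℝ)..r, Real.exp ((α / 8) * s ^ 2))
        ≤ (4 / |α|) * (Real.exp (|α| * D ^ 2 / 8) - 1) := hIneq.trans_eq (hEq hαneg)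
    have hinv := inv_anti₀ hIpos hJ
    calc (|α| / 4) / (Real.exp (|α| * D ^ 2 / 8) - 1)
        = ((4 / |α|) * (Real.exp (|α| * D ^ 2 / 8) - 1))⁻¹ := by
          have hα0 : |α| ≠ 0 := abs_ne_zero.mpr hαneg.ne
          field_simp
      _ ≤ _ := hinv
end
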